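/- Let g : [0,∞) → ℝ be continuous, differentiable on (0,∞), with g(0) = 0, g(z) → 0 as z → ∞, and suppose g'(z) ≤ c(z) g(z) for all z > 0, where c(z) = (2+3z²)/(z(2+z²)). Then g(z) ≥ 0 for all z ≥ 0. -/

import Mathlib

open Real Set Filter Topology

noncomputable def phi (y : ℝ) : ℝ := (Real.sqrt (2 * Real.pi))⁻¹ * Real.exp (-y ^ 2 / 2)

noncomputable def Phi (x : ℝ) : ℝ := ∫ y in Set.Iic x, phi y

noncomputable def PhiInv (a : ℝ) : ℝ := Function.invFun Phi a

theorem ode_comparison (g : ℝ → ℝ)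
    (hcont : ContinuousOn g (Set.Ici 0))
    (hdiff : ∀ z > (0 : ℝ), DifferentiableAt ℝ g z)
    (h0 : g 0 = 0)
    (hlim : Filter.Tendsto g Filter.atTop (𝓝 0))
    (hineq : ∀ z > (0 : ℝ), deriv g z ≤ ((2 + 3 * z ^ 2) / (z * (2 + z ^ 2))) * g z) :
    ∀ z ≥ (0 : ℝ), 0 ≤ g z := by
  by_contra hcon
  push_neg at hcon
  obtain ⟨z₀, hz₀, hgz₀⟩ := hcon
  have hz0pos : 0 < z₀ := by
    rcases lt_or_eq_of_le hz₀ with h | h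
    · exact h
    · exfalso; rw [← h, h0] at hgz₀; exact absurd hgz₀ (lt_irrefl 0)
  set u : ℝ → ℝ := fun z => 2 * z + z ^ 3 with hu
  have hupos : ∀ z > (0 : ℝ), 0 < u z := by
    intro z hz; simp only [hu]; positivity
  have hudiff : ∀ z : ℝ, HasDerivAt u (2 + 3 * z ^ 2) z := by
    intro z
    have h1 : HasDerivAt (fun z : ℝ => 2 * z) 2 z := by
      simpa using (hasDerivAt_id z).const_mul 2
    have h2 : HasDerivAt (fun z : ℝ => z ^ 3) (3 * z ^ 2) z := by
      simpa using hasDerivAt_pow 3 z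
    exact h1.add h2
  set h : ℝ → ℝ := fun z => g z / u z with hh
  have hune : ∀ z > (0 : ℝ), u z ≠ 0 := fun z hz => ne_of_gt (hupos z hz)
  -- h is antitone on Ici z₀
  have hdiffh : ∀ z > (0 : ℝ), DifferentiableAt ℝ h z := by
    intro z hz
    exact (hdiff z hz).div (hudiff z).differentiableAt (hune z hz)
  have hderivh : ∀ z > (0 : ℝ), deriv h z ≤ 0 := by
    intro z hz
    have hd : deriv h z = (deriv g z * u z - g z * (2 + 3 * z ^ 2)) / (u z) ^ 2 := by
      rw [hh]
      rw [show (fun z => g z / u z) = g / u from rfl, deriv_div (hdiff z hz) (hudiff z).differentiableAt (hune z hz),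
        (hudiff z).deriv]
    rw [hd]
    apply div_nonpos_of_nonpos_of_nonneg _ (sq_nonneg _)
    have hkey : deriv g z * u z ≤ (2 + 3 * z ^ 2) * g z := by
      have := hineq z hz
      have hzz : z * (2 + z ^ 2) > 0 := by positivity
      have := mul_le_mul_of_nonneg_right this (le_of_lt (hupos z hz))
      calc deriv g z * u z ≤ ((2 + 3 * z ^ 2) / (z * (2 + z ^ 2))) * g z * u z := this
        _ = (2 + 3 * z ^ 2) * g z := by
            have hne : z * (2 + z ^ 2) ≠ 0 := ne_of_gt hzz
            simp only [hu]
            rw [div_mul_eq_mul_div, div_mul_eq_mul_div, div_eq_iff hne]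
            ring
    linarith
  have hanti : AntitoneOn h (Set.Ici z₀) := by
    apply antitoneOn_of_deriv_nonpos (convex_Ici z₀)
    · intro z hz
      exact ((hdiffh z (lt_of_lt_of_le hz0pos hz)).continuousAt).continuousWithinAt
    · intro z hz
      rw [interior_Ici] at hz
      exact (hdiffh z (lt_trans hz0pos hz)).differentiableWithinAt
    · intro z hz
      rw [interior_Ici] at hz
      exact hderivh z (lt_trans hz0pos hz)
  have hh0 : h z₀ < 0 := div_neg_of_neg_of_pos hgz₀ (hupos z₀ hz0pos)
  -- for all z ≥ z₀, g z ≤ g z₀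
  have hbound : ∀ z ≥ z₀, g z ≤ g z₀ := by
    intro z hz
    have hzpos : 0 < z := lt_of_lt_of_le hz0pos hz
    have h1 : h z ≤ h z₀ := hanti (self_mem_Ici) hz hz
    have humono : u z₀ ≤ u z := by
      simp only [hu]
      have : z₀ ^ 3 ≤ z ^ 3 := pow_le_pow_left₀ (le_of_lt hz0pos) hz 3
      nlinarith
    have hgz : g z = h z * u z := by
      rw [hh]; exact (div_mul_cancel₀ (g z) (hune z hzpos)).symm
    have hgz0 : g z₀ = h z₀ * u z₀ := by
      rw [hh]; exact (div_mul_cancel₀ (g z₀) (hune z₀ hz0pos)).symm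
    rw [hgz, hgz0]
    calc h z * u z ≤ h z₀ * u z := by
          exact mul_le_mul_of_nonneg_right h1 (le_of_lt (hupos z hzpos))
      _ ≤ h z₀ * u z₀ := mul_le_mul_of_nonpos_left humono (le_of_lt hh0)
  -- contradiction with limit
  have hev : ∀ᶠ z in Filter.atTop, g z₀ < g z :=
    hlim.eventually (eventually_gt_nhds hgz₀)
  obtain ⟨z, hz1, hz2⟩ := (hev.and (eventually_ge_atTop z₀)).exists
  exact absurd (hbound z hz2) (not_le.mpr hz1)
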